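/- Let n ≥ 1, c : Fin n → ℂ and r : Fin n → ℝ with r i > 0 for all i. Let T = {z : Fin n → ℂ | ∀ i, |z i − c i| = r i} (a compact subset of ℂⁿ) and let C(T, ℂ) be the Banach space of continuous complex-valued functions on T with the supremum norm. Then the map from the open polydisc {w : Fin n → ℂ | ∀ i, |w i − c i| < r i} to C(T, ℂ) sending w to the function z ↦ Π_{i} (z i − w i)⁻¹ is complex-analytic at every point of the open polydisc. -/

import Mathlib

/-- The distinguished boundary torus `T = {z : Fin n → ℂ | ∀ i, |z i - c i| = r i}`. -/
def polyTorus (n : ℕ) (c : Fin n → ℂ) (r : Fin n → ℝ) : Set (Fin n → ℂ) :=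
  {z | ∀ i, ‖z i - c i‖ = r i}

instance polyTorus.compactSpace (n : ℕ) (c : Fin n → ℂ) (r : Fin n → ℝ) :
    CompactSpace (polyTorus n c r) := by
  rw [← isCompact_iff_compactSpace]
  have h : polyTorus n c r = Set.pi Set.univ (fun i => Metric.sphere (c i) (r i)) := by
    ext z
    simp [polyTorus, Set.mem_pi, Metric.mem_sphere, Complex.dist_eq]
  rw [h]
  exact isCompact_univ_pi fun i => isCompact_sphere _ _

namespace PolyAux

variable (n : ℕ) (c : Fin n → ℂ) (r : Fin n → ℝ)

/-- The `i`-th coordinate function on the torus. -/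
def coord (i : Fin n) : C(polyTorus n c r, ℂ) :=
  ⟨fun z => (z : Fin n → ℂ) i, (continuous_apply i).comp continuous_subtype_val⟩

/-- The continuous linear map `w ↦ const (w i)`. -/
noncomputable def constOf (i : Fin n) : (Fin n → ℂ) →L[ℂ] C(polyTorus n c r, ℂ) :=
  (ContinuousLinearMap.proj i).smulRight (1 : C(polyTorus n c r, ℂ))

lemma lin_apply (i : Fin n) (w : Fin n → ℂ) (z : polyTorus n c r) :
    (coord n c r i - constOf n c r i w) z = (z : Fin n → ℂ) i - w i := by
  simp [coord, constOf, smul_eq_mul]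

lemma ne_zero {w : Fin n → ℂ} (hw : ∀ i, ‖w i - c i‖ < r i)
    (i : Fin n) (z : polyTorus n c r) : (z : Fin n → ℂ) i - w i ≠ 0 := by
  intro h
  have hz : ‖(z : Fin n → ℂ) i - c i‖ = r i := z.2 i
  have : (z : Fin n → ℂ) i = w i := sub_eq_zero.mp h
  rw [this] at hz
  exact absurd hz (ne_of_lt (hw i))

/-- The explicit unit with value `z ↦ z i - w i`. -/
noncomputable def theUnit {w : Fin n → ℂ} (hw : ∀ i, ‖w i - c i‖ < r i)
    (i : Fin n) : C(polyTorus n c r, ℂ)ˣ where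
  val := coord n c r i - constOf n c r i w
  inv := ⟨fun z => ((z : Fin n → ℂ) i - w i)⁻¹, by
    refine Continuous.inv₀ (((continuous_apply i).comp continuous_subtype_val).sub
      continuous_const) (ne_zero n c r hw i)⟩
  val_inv := by
    ext z
    simp only [ContinuousMap.mul_apply, lin_apply, ContinuousMap.coe_mk, ContinuousMap.one_apply]
    exact mul_inv_cancel₀ (ne_zero n c r hw i z)
  inv_val := by
    ext z
    simp only [ContinuousMap.mul_apply, lin_apply, ContinuousMap.coe_mk, ContinuousMap.one_apply]
    exact inv_mul_cancel₀ (ne_zero n c r hw i z)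

lemma ringInverse_eq {w : Fin n → ℂ} (hw : ∀ i, ‖w i - c i‖ < r i) (i : Fin n)
    (z : polyTorus n c r) :
    Ring.inverse (coord n c r i - constOf n c r i w) z = ((z : Fin n → ℂ) i - w i)⁻¹ := by
  have : Ring.inverse ((theUnit n c r hw i : C(polyTorus n c r, ℂ)ˣ) : C(polyTorus n c r, ℂ))
      = ((theUnit n c r hw i)⁻¹ : C(polyTorus n c r, ℂ)ˣ) := Ring.inverse_unit _
  rw [show (coord n c r i - constOf n c r i w) = ((theUnit n c r hw i : C(polyTorus n c r, ℂ)ˣ)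
      : C(polyTorus n c r, ℂ)) from rfl, this]
  rfl

end PolyAux

/-- The map from the open polydisc `{w : Fin n → ℂ | ∀ i, |w i - c i| < r i}` to the
Banach space `C(T, ℂ)` of continuous functions on the distinguished boundary torus,
sending `w` to `z ↦ ∏ i, (z i - w i)⁻¹`, is complex-analytic at every point of the
polydisc. (Outside the polydisc the map is extended by the junk value `0`.) -/
theorem stmt_3 (n : ℕ) (hn : 1 ≤ n) (c : Fin n → ℂ) (r : Fin n → ℝ)
    (hr : ∀ i, 0 < r i) (w₀ : Fin n → ℂ) (hw₀ : ∀ i, ‖w₀ i - c i‖ < r i) :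
    AnalyticAt ℂ
      (fun w : Fin n → ℂ =>
        if h : ∀ i, ‖w i - c i‖ < r i then
          ContinuousMap.mk
            (fun z : polyTorus n c r => ∏ i, (((z : Fin n → ℂ) i) - w i)⁻¹)
            (by
              refine continuous_finset_prod _ fun i _ => ?_
              refine Continuous.inv₀
                (((continuous_apply i).comp continuous_subtype_val).sub continuous_const)
                fun z => sub_ne_zero.mpr fun hz => ?_
              have hz' : ‖w i - c i‖ = r i := by rw [← hz]; exact z.2 i
              exact absurd hz' (ne_of_lt (h i)))
        else 0)
      w₀ := by
  open PolyAux in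
  have hana : AnalyticAt ℂ
      (fun w : Fin n → ℂ => ∏ i, Ring.inverse (coord n c r i - constOf n c r i w)) w₀ := by
    refine Finset.analyticAt_fun_prod Finset.univ fun i _ => ?_
    have h1 : AnalyticAt ℂ (fun w : Fin n → ℂ => coord n c r i - constOf n c r i w) w₀ :=
      analyticAt_const.sub ((constOf n c r i).analyticAt w₀)
    have h2 : AnalyticAt ℂ (Ring.inverse : C(polyTorus n c r, ℂ) → C(polyTorus n c r, ℂ))
        (coord n c r i - constOf n c r i w₀) := analyticAt_inverse (theUnit n c r hw₀ i)
    have : AnalyticAt ℂ (Ring.inverse ∘ fun w : Fin n → ℂ => coord n c r i - constOf n c r i w) w₀ :=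
      AnalyticAt.comp (f := fun w : Fin n → ℂ => coord n c r i - constOf n c r i w)
        (x := w₀) h2 h1
    exact this
  refine hana.congr ?_
  have hU : IsOpen {w : Fin n → ℂ | ∀ i, ‖w i - c i‖ < r i} := by
    have : {w : Fin n → ℂ | ∀ i, ‖w i - c i‖ < r i}
        = Set.pi Set.univ fun i => Metric.ball (c i) (r i) := by
      ext w
      simp [Set.mem_pi, Metric.mem_ball, Complex.dist_eq]
    rw [this]
    exact isOpen_set_pi Set.finite_univ fun i _ => Metric.isOpen_ball
  filter_upwards [hU.mem_nhds hw₀] with w hw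
  rw [dif_pos hw]
  ext z
  simp only [ContinuousMap.prod_apply, ContinuousMap.coe_mk]
  exact Finset.prod_congr rfl fun i _ => ringInverse_eq n c r hw i z
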